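/- For all a, b, c ≥ 0 and every integer k with 0 ≤ k ≤ min{a,b}, the weight generating function of semistandard tableaux of shape λ(a,b,c) with entries in {1,…,n} and residue exactly k equals the weight generating function of semistandard tableaux of shape λ(a−k, b−k, c+k) with entries in {1,…,n} and residue exactly 0: ch SST_n(λ(a,b,c))_{(k)} = ch SST_n(λ(a−k,b−k,c+k))_{(0)} in ℤ[x_1,…,x_n]. -/

import Mathlib

open MvPolynomial

/-- A semistandard tableau of skew shape `λ(a,b,c) = (2^{b+c},1^a)/(1^b)` with entries in
`{1,…,n}` (encoded as `Fin n`), given as a pair `T = (L, R)` of strictly increasing columns: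
`L` of height `a+c` (occupying rows `b+1,…,a+b+c`) and `R` of height `b+c` (occupying rows
`1,…,b+c`), with the row condition `l_j ≤ r_{b+j}` for `1 ≤ j ≤ c` (here `0`-indexed). -/
def IsTab (n a b c : ℕ) (T : (Fin (a + c) → Fin n) × (Fin (b + c) → Fin n)) : Prop :=
  StrictMono T.1 ∧ StrictMono T.2 ∧
    ∀ (j : ℕ) (_ : j < c) (h2 : j < a + c) (h3 : b + j < b + c),
      T.1 ⟨j, h2⟩ ≤ T.2 ⟨b + j, h3⟩

/-- The tableau obtained from `T` by sliding the right column `R` down by `k` positions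
(`0 ≤ k ≤ min{a,b}`) is again semistandard, i.e. `l_j ≤ r_{b+j−k}` for all `1 ≤ j ≤ c+k`
(here `0`-indexed). -/
def Slides (n a b c : ℕ) (T : (Fin (a + c) → Fin n) × (Fin (b + c) → Fin n)) (k : ℕ) : Prop :=
  k ≤ a ∧ k ≤ b ∧
    ∀ (j : ℕ) (_ : j < c + k) (h2 : j < a + c) (h3 : b + j - k < b + c),
      T.1 ⟨j, h2⟩ ≤ T.2 ⟨b + j - k, h3⟩

/-- The residue `𝔯_T`: the maximal `k` such that sliding `R` down by `k` positions keeps the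
tableau semistandard (`k = 0` always qualifies for a semistandard tableau). -/
noncomputable def tabResidue (n a b c : ℕ)
    (T : (Fin (a + c) → Fin n) × (Fin (b + c) → Fin n)) : ℕ :=
  sSup {k | Slides n a b c T k}

/-- The weight monomial `x^T = (∏_j x_{l_j}) · (∏_i x_{r_i})` of a tableau `T`. -/
noncomputable def tabWt (n a b c : ℕ) (T : (Fin (a + c) → Fin n) × (Fin (b + c) → Fin n)) :
    MvPolynomial (Fin n) ℤ :=
  (∏ j, X (T.1 j)) * (∏ i, X (T.2 i))

/-- The weight generating function `ch X = Σ_{T ∈ X} x^T` of a (finite) set of tableaux. -/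
noncomputable def tabCh (n a b c : ℕ)
    (Xs : Set ((Fin (a + c) → Fin n) × (Fin (b + c) → Fin n))) : MvPolynomial (Fin n) ℤ :=
  ∑ᶠ T ∈ Xs, tabWt n a b c T

/-- The `j`-th elementary symmetric polynomial in `x_1, …, x_n` over `ℤ`, indexed by `j : ℤ`,
with the conventions `e_0 = 1` and `e_j = 0` for `j < 0` or `j > n`. -/
noncomputable def eZ (n : ℕ) (j : ℤ) : MvPolynomial (Fin n) ℤ :=
  if 0 ≤ j then esymm (Fin n) ℤ j.toNat else 0

/-- `E_r = Σ_{i=0}^{n} e_i · e_{r+i}` for `r : ℤ`. -/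
noncomputable def EZ (n : ℕ) (r : ℤ) : MvPolynomial (Fin n) ℤ :=
  ∑ i ∈ Finset.range (n + 1), eZ n i * eZ n (r + i)

lemma castStrictMono {p q : ℕ} (h : p = q) : StrictMono (Fin.cast h) :=
  fun _ _ hij => hij

lemma slides_zero_of_isTab {n a b c : ℕ} {T : (Fin (a + c) → Fin n) × (Fin (b + c) → Fin n)}
    (h : IsTab n a b c T) : Slides n a b c T 0 := by
  refine ⟨Nat.zero_le _, Nat.zero_le _, fun j hj hj2 hj3 => ?_⟩
  exact h.2.2 j (by omega) hj2 (by omega)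

lemma isTab_of_slides {n a b c m : ℕ} {T : (Fin (a + c) → Fin n) × (Fin (b + c) → Fin n)}
    (hT1 : StrictMono T.1) (hT2 : StrictMono T.2) (h : Slides n a b c T m) :
    IsTab n a b c T := by
  refine ⟨hT1, hT2, fun j hj hj2 hj3 => ?_⟩
  have h3' : b + j - m < b + c := by omega
  exact le_trans (h.2.2 j (by omega) hj2 h3') (hT2.monotone (Fin.mk_le_mk.mpr (by omega)))

lemma slides_shift {n a b c k : ℕ} (hka : k ≤ a) (hkb : k ≤ b)
    (e1 : a - k + (c + k) = a + c) (e2 : b - k + (c + k) = b + c)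
    (T : (Fin (a + c) → Fin n) × (Fin (b + c) → Fin n)) (m : ℕ) :
    Slides n a b c T (k + m) ↔
      Slides n (a - k) (b - k) (c + k) (T.1 ∘ Fin.cast e1, T.2 ∘ Fin.cast e2) m := by
  constructor
  · rintro ⟨h1, h2, h3⟩
    refine ⟨by omega, by omega, fun j hj hj2 hj3 => ?_⟩
    have hj2' : j < a + c := by omega
    have hj3' : b + j - (k + m) < b + c := by omega
    have h := h3 j (by omega) hj2' hj3'
    simp only [Function.comp_apply]
    convert h using 2
    all_goals exact Fin.ext (by simp only [Fin.coe_cast] <;> omega)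
  · rintro ⟨h1, h2, h3⟩
    refine ⟨by omega, by omega, fun j hj hj2 hj3 => ?_⟩
    have hj2' : j < a - k + (c + k) := by omega
    have hj3' : b - k + j - m < b - k + (c + k) := by omega
    have h := h3 j (by omega) hj2' hj3'
    simp only [Function.comp_apply] at h
    convert h using 2
    all_goals exact Fin.ext (by simp only [Fin.coe_cast] <;> omega)

lemma mem_shift (n a b c k : ℕ) (hka : k ≤ a) (hkb : k ≤ b)
    (e1 : a - k + (c + k) = a + c) (e2 : b - k + (c + k) = b + c)
    (T : (Fin (a + c) → Fin n) × (Fin (b + c) → Fin n)) :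
    (IsTab n a b c T ∧ tabResidue n a b c T = k) ↔
      (IsTab n (a - k) (b - k) (c + k) (T.1 ∘ Fin.cast e1, T.2 ∘ Fin.cast e2) ∧
        tabResidue n (a - k) (b - k) (c + k) (T.1 ∘ Fin.cast e1, T.2 ∘ Fin.cast e2) = 0) := by
  set gT := (T.1 ∘ Fin.cast e1, T.2 ∘ Fin.cast e2) with hgT
  set S : Set ℕ := {m | Slides n a b c T m} with hS
  set S' : Set ℕ := {m | Slides n (a - k) (b - k) (c + k) gT m} with hS'
  have bddS : BddAbove S := ⟨a, fun m hm => hm.1⟩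
  have bddS' : BddAbove S' := ⟨a - k, fun m hm => hm.1⟩
  have key : ∀ m, (k + m) ∈ S ↔ m ∈ S' := fun m => slides_shift hka hkb e1 e2 T m
  constructor
  · rintro ⟨hTab, hres⟩
    have hS0 : (0 : ℕ) ∈ S := slides_zero_of_isTab hTab
    have hkS : k ∈ S := by
      have := Nat.sSup_mem ⟨0, hS0⟩ bddS
      rwa [show sSup S = k from hres] at this
    have h0S' : (0 : ℕ) ∈ S' := (key 0).mp (by simpa using hkS)
    have hm1 : StrictMono gT.1 := hTab.1.comp (castStrictMono e1)
    have hm2 : StrictMono gT.2 := hTab.2.1.comp (castStrictMono e2)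
    refine ⟨isTab_of_slides hm1 hm2 h0S', ?_⟩
    refine le_antisymm (csSup_le ⟨0, h0S'⟩ fun m hm => ?_) (Nat.zero_le _)
    have : k + m ∈ S := (key m).mpr hm
    have hle := le_csSup bddS this
    have hres2 : sSup S = k := hres
    omega
  · rintro ⟨hTab', hres'⟩
    have h0S' : (0 : ℕ) ∈ S' := slides_zero_of_isTab hTab'
    have hkS : k ∈ S := by
      have := (key 0).mpr h0S'
      simpa using this
    have hm1 : StrictMono T.1 := by
      have : StrictMono (gT.1 ∘ Fin.cast e1.symm) := hTab'.1.comp (castStrictMono e1.symm)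
      exact this
    have hm2 : StrictMono T.2 := by
      have : StrictMono (gT.2 ∘ Fin.cast e2.symm) := hTab'.2.1.comp (castStrictMono e2.symm)
      exact this
    refine ⟨isTab_of_slides hm1 hm2 hkS, ?_⟩
    refine le_antisymm (csSup_le ⟨k, hkS⟩ fun m hm => ?_) (le_csSup bddS hkS)
    rcases le_or_gt m k with h | h
    · exact h
    · exfalso
      have : m - k ∈ S' := (key (m - k)).mp (by rwa [show k + (m - k) = m by omega])
      have hle := le_csSup bddS' this
      have hres2 : sSup S' = 0 := hres'
      omega

/-- For all `a, b, c ≥ 0` and every `k` with `0 ≤ k ≤ min{a,b}`: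
`ch SST_n(λ(a,b,c))_{(k)} = ch SST_n(λ(a−k,b−k,c+k))_{(0)}` in `ℤ[x_1,…,x_n]`. -/
theorem ch_residue_shift (n : ℕ) (hn : 1 ≤ n) (a b c k : ℕ) (hka : k ≤ a) (hkb : k ≤ b) :
    tabCh n a b c {T | IsTab n a b c T ∧ tabResidue n a b c T = k} =
      tabCh n (a - k) (b - k) (c + k)
        {T | IsTab n (a - k) (b - k) (c + k) T ∧
          tabResidue n (a - k) (b - k) (c + k) T = 0} := by
  have e1 : a - k + (c + k) = a + c := by omega
  have e2 : b - k + (c + k) = b + c := by omega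
  set g : ((Fin (a + c) → Fin n) × (Fin (b + c) → Fin n)) →
      ((Fin (a - k + (c + k)) → Fin n) × (Fin (b - k + (c + k)) → Fin n)) :=
    fun T => (T.1 ∘ Fin.cast e1, T.2 ∘ Fin.cast e2) with hg
  have hmem := fun T => mem_shift n a b c k hka hkb e1 e2 T
  unfold tabCh
  refine finsum_mem_eq_of_bijOn g ⟨fun T hT => (hmem T).mp hT, ?_, fun U hU => ?_⟩ ?_
  · intro T _ U _ h
    have h1 : T.1 ∘ Fin.cast e1 = U.1 ∘ Fin.cast e1 := congrArg Prod.fst h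
    have h2 : T.2 ∘ Fin.cast e2 = U.2 ∘ Fin.cast e2 := congrArg Prod.snd h
    have hfst : T.1 = U.1 := funext fun x => congrFun h1 (Fin.cast e1.symm x)
    have hsnd : T.2 = U.2 := funext fun x => congrFun h2 (Fin.cast e2.symm x)
    exact Prod.ext hfst hsnd
  · exact ⟨(U.1 ∘ Fin.cast e1.symm, U.2 ∘ Fin.cast e2.symm), (hmem _).mpr hU, rfl⟩
  · intro T _
    unfold tabWt
    congr 1
    · exact (Fintype.prod_equiv (finCongr e1) _ _ fun x => rfl).symm
    · exact (Fintype.prod_equiv (finCongr e2) _ _ fun x => rfl).symm
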